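/- Let G be a minimally non-(3,4)-colorable graph with girth at least 5, and let C = u_1 u_2 u_3 u_4 u_5 u_6 be a 6-cycle in G such that exactly one of the vertices u_1, ..., u_6 has degree 2 and exactly one of them is a 5p-vertex. Then at most two of the vertices u_1, ..., u_6 are 5s-vertices or 6p-vertices. -/

import Mathlib

/-- The degree of a vertex: the number of its neighbors. -/
noncomputable def degN {V : Type*} (G : SimpleGraph V) (v : V) : ℕ :=
  {w | G.Adj v w}.ncard

/-- `c` is a (3,4)-coloring of `G`: every vertex gets value 3 or 4, and every
vertex with value `i` has at most `i` neighbors with value `i`. -/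
def IsColoring34 {V : Type*} (G : SimpleGraph V) (c : V → ℕ) : Prop :=
  (∀ v, c v = 3 ∨ c v = 4) ∧ ∀ v, {w | G.Adj v w ∧ c w = c v}.ncard ≤ c v

/-- `G` is (3,4)-colorable. -/
def Colorable34 {V : Type*} (G : SimpleGraph V) : Prop :=
  ∃ c, IsColoring34 G c

/-- The graph `G − v` obtained by deleting the vertex `v` and its incident edges
(keeping `v` as an isolated vertex, which does not affect (3,4)-colorability). -/
def deleteVert {V : Type*} (G : SimpleGraph V) (v : V) : SimpleGraph V where
  Adj a b := G.Adj a b ∧ a ≠ v ∧ b ≠ v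
  symm := ⟨fun _ _ ⟨h, ha, hb⟩ => ⟨h.symm, hb, ha⟩⟩
  loopless := ⟨fun a ⟨h, _, _⟩ => G.loopless.irrefl a h⟩

/-- `G` is minimally non-(3,4)-colorable. -/
def MinNonColorable34 {V : Type*} (G : SimpleGraph V) : Prop :=
  ¬ Colorable34 G ∧ (∀ v, Colorable34 (deleteVert G v)) ∧
    ∀ e ∈ G.edgeSet, Colorable34 (G.deleteEdges {e})

/-- `u` is `i`-saturated under the coloring `c` of the graph `G`. -/
def Saturated34 {V : Type*} (G : SimpleGraph V) (c : V → ℕ) (i : ℕ) (u : V) : Prop :=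
  c u = i ∧ {w | G.Adj u w ∧ c w = i}.ncard = i

/-- `u` can be recolored: changing the color of `u` to the other color
(`7 - c u` swaps 3 and 4) again yields a (3,4)-coloring of `G`. -/
def Recolorable34 {V : Type*} [DecidableEq V] (G : SimpleGraph V) (c : V → ℕ) (u : V) : Prop :=
  IsColoring34 G (Function.update c u (7 - c u))

/-- The number of 3^+-neighbors of `x` in `G` (neighbors of degree at least 3). -/
noncomputable def tpn {V : Type*} (G : SimpleGraph V) (x : V) : ℕ :=
  {w | G.Adj x w ∧ 3 ≤ degN G w}.ncard

/-- A 5p-vertex (poor 5-vertex): degree 5 with exactly one 3^+-neighbor. -/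
def Is5p {V : Type*} (G : SimpleGraph V) (x : V) : Prop := degN G x = 5 ∧ tpn G x = 1

/-- A 5s-vertex (semi-poor 5-vertex): degree 5 with exactly two 3^+-neighbors. -/
def Is5s {V : Type*} (G : SimpleGraph V) (x : V) : Prop := degN G x = 5 ∧ tpn G x = 2

/-- A 6p-vertex (poor 6-vertex): degree 6 with exactly one 3^+-neighbor. -/
def Is6p {V : Type*} (G : SimpleGraph V) (x : V) : Prop := degN G x = 6 ∧ tpn G x = 1

/-- `G` has girth at least 5: no 3-cycles and no 4-cycles. -/
def GirthAtLeast5 {V : Type*} (G : SimpleGraph V) : Prop :=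
  (∀ a b c : V, G.Adj a b → G.Adj b c → ¬ G.Adj c a) ∧
  (∀ a b c d : V, a ≠ c → b ≠ d →
    G.Adj a b → G.Adj b c → G.Adj c d → ¬ G.Adj d a)

set_option linter.unusedSectionVars false
set_option linter.unusedVariables false
set_option maxHeartbeats 1000000

section Helpers
variable {V : Type*} [Fintype V] [DecidableEq V] {G : SimpleGraph V}

lemma deleteVert_adj {v a b : V} : (deleteVert G v).Adj a b ↔ G.Adj a b ∧ a ≠ v ∧ b ≠ v :=
  Iff.rfl

lemma two_le_degN {v x y : V} (hxy : x ≠ y) (h1 : G.Adj v x) (h2 : G.Adj v y) :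
    2 ≤ degN G v := by
  have hsub : ({x, y} : Set V) ⊆ {w | G.Adj v w} := by
    rintro w (rfl | rfl) <;> simpa
  calc 2 = ({x, y} : Set V).ncard := (Set.ncard_pair hxy).symm
    _ ≤ _ := Set.ncard_le_ncard hsub (Set.toFinite _)

lemma two_le_tpn {v x y : V} (hxy : x ≠ y) (h1 : G.Adj v x) (h2 : G.Adj v y)
    (d1 : 3 ≤ degN G x) (d2 : 3 ≤ degN G y) : 2 ≤ tpn G v := by
  have hsub : ({x, y} : Set V) ⊆ {w | G.Adj v w ∧ 3 ≤ degN G w} := by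
    rintro w (rfl | rfl) <;> exact ⟨by assumption, by assumption⟩
  calc 2 = ({x, y} : Set V).ncard := (Set.ncard_pair hxy).symm
    _ ≤ _ := Set.ncard_le_ncard hsub (Set.toFinite _)

lemma tpn_unique {v z : V} (h : tpn G v = 1) (hz : G.Adj v z) (hdz : 3 ≤ degN G z)
    {x : V} (hx : G.Adj v x) (hdx : 3 ≤ degN G x) : x = z := by
  by_contra hne
  have := two_le_tpn hne hx hz hdx hdz
  omega

lemma tpn_two {v x y : V} (htpn : tpn G v = 2) (hxy : x ≠ y) (hax : G.Adj v x)
    (hay : G.Adj v y) (hdx : 3 ≤ degN G x) (hdy : 3 ≤ degN G y) :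
    ∀ z, G.Adj v z → z ≠ x → z ≠ y → degN G z ≤ 2 := by
  intro z hz hzx hzy
  by_contra h
  push_neg at h
  have h3 : ({z, x, y} : Set V).ncard = 3 := by
    rw [Set.ncard_insert_of_notMem (by simp [hzx, hzy]) (Set.toFinite _), Set.ncard_pair hxy]
  have hsub : ({z, x, y} : Set V) ⊆ {w | G.Adj v w ∧ 3 ≤ degN G w} := by
    rintro w (rfl | rfl | rfl)
    · exact ⟨hz, h⟩
    · exact ⟨hax, hdx⟩
    · exact ⟨hay, hdy⟩
  have hb := Set.ncard_le_ncard hsub (Set.toFinite _)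
  have h2 : {w | G.Adj v w ∧ 3 ≤ degN G w}.ncard = 2 := htpn
  omega

lemma split34 {c : V → ℕ} (hvals : ∀ v, c v = 3 ∨ c v = 4) (N : Set V) :
    N.ncard = {x | x ∈ N ∧ c x = 3}.ncard + {x | x ∈ N ∧ c x = 4}.ncard := by
  rw [← Set.ncard_union_eq ?dis (Set.toFinite _) (Set.toFinite _)]
  · congr 1
    ext x
    simp only [Set.mem_setOf_eq, Set.mem_union]
    rcases hvals x with h | h <;> constructor <;> intro hh <;> tauto
  case dis =>
    rw [Set.disjoint_left]
    rintro a ⟨_, h3⟩ ⟨_, h4⟩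
    omega

lemma NH_eq {u1 v : V} (hv : v ≠ u1) :
    {x | (deleteVert G u1).Adj v x} = {x | G.Adj v x} \ {u1} := by
  ext x
  simp only [Set.mem_setOf_eq, Set.mem_diff, Set.mem_singleton_iff, deleteVert_adj]
  tauto

lemma split34' {c : V → ℕ} (hvals : ∀ v, c v = 3 ∨ c v = 4) (P : V → Prop) :
    {x | P x}.ncard = {x | P x ∧ c x = 3}.ncard + {x | P x ∧ c x = 4}.ncard := by
  rw [← Set.ncard_union_eq ?dis (Set.toFinite _) (Set.toFinite _)]
  · congr 1
    ext x
    simp only [Set.mem_setOf_eq, Set.mem_union]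
    rcases hvals x with h | h <;> constructor <;> intro hh <;> tauto
  case dis =>
    rw [Set.disjoint_left]
    rintro a ⟨_, h3⟩ ⟨_, h4⟩
    omega
lemma L_INS (G : SimpleGraph V) (u1 u2 u6 : V) (c : V → ℕ)
    (hc : IsColoring34 (deleteVert G u1) c)
    (hN1 : ∀ x, G.Adj u1 x → x = u2 ∨ x = u6)
    (ne26 : u2 ≠ u6)
    (j : ℕ) (hj : j = 3 ∨ j = 4)
    (h2 : c u2 = j → {w | (deleteVert G u1).Adj u2 w ∧ c w = c u2}.ncard < j)
    (h6 : c u6 = j → {w | (deleteVert G u1).Adj u6 w ∧ c w = c u6}.ncard < j) :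
    Colorable34 G := by
  classical
  set c' : V → ℕ := fun x => if x = u1 then j else c x with hc'def
  have e1 : c' u1 = j := by simp [hc'def]
  have eOther : ∀ x, x ≠ u1 → c' x = c x := by
    intro x hx; simp [hc'def, hx]
  refine ⟨c', ⟨?_, ?_⟩⟩
  · intro v
    by_cases hv : v = u1
    · subst hv; rw [e1]; exact hj
    · rw [eOther v hv]; exact hc.1 v
  intro v
  by_cases hv1 : v = u1
  · subst hv1
    rw [e1]
    have hsub : {w | G.Adj v w ∧ c' w = j} ⊆ ({u2, u6} : Set V) := by
      rintro w ⟨h, -⟩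
      rcases hN1 w h with rfl | rfl <;> simp
    have hb := Set.ncard_le_ncard hsub (Set.toFinite _)
    have hp : ({u2, u6} : Set V).ncard = 2 := Set.ncard_pair ne26
    omega
  · rw [eOther v hv1]
    by_cases hget : G.Adj v u1 ∧ c v = j
    · have hsub : {w | G.Adj v w ∧ c' w = c v} ⊆
          insert u1 {w | (deleteVert G u1).Adj v w ∧ c w = c v} := by
        rintro w ⟨hadj, hcol⟩
        by_cases hw : w = u1
        · subst hw; exact Set.mem_insert _ _
        · exact Set.mem_insert_of_mem _ ⟨⟨hadj, hv1, hw⟩, by rwa [eOther w hw] at hcol⟩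
      have hb := Set.ncard_le_ncard hsub (Set.toFinite _)
      have hi := Set.ncard_insert_le u1 {w | (deleteVert G u1).Adj v w ∧ c w = c v}
      rcases hN1 v hget.1.symm with rfl | rfl
      · have := h2 hget.2; omega
      · have := h6 hget.2; omega
    · push_neg at hget
      have hsub : {w | G.Adj v w ∧ c' w = c v} ⊆
          {w | (deleteVert G u1).Adj v w ∧ c w = c v} := by
        rintro w ⟨hadj, hcol⟩
        by_cases hw : w = u1
        · subst hw
          rw [e1] at hcol
          exact absurd hcol.symm (hget hadj)
        · exact ⟨⟨hadj, hv1, hw⟩, by rwa [eOther w hw] at hcol⟩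
      exact le_trans (Set.ncard_le_ncard hsub (Set.toFinite _)) (hc.2 v)

lemma L_SWAP2 (G : SimpleGraph V) (u1 u2 u6 : V) (c : V → ℕ)
    (hc : IsColoring34 (deleteVert G u1) c)
    (hN1 : ∀ x, G.Adj u1 x → x = u2 ∨ x = u6)
    (ne21 : u2 ≠ u1) (ne61 : u6 ≠ u1) (ne26 : u2 ≠ u6)
    (hc6 : c u6 = 3)
    (hAll : ∀ x, (deleteVert G u1).Adj u2 x → c x = 4) :
    Colorable34 G := by
  classical
  set c' : V → ℕ := fun x => if x = u1 then 4 else if x = u2 then 3 else c x with hc'def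
  have e1 : c' u1 = 4 := by simp [hc'def, ne21.symm]
  have e2 : c' u2 = 3 := by simp [hc'def, ne21]
  have eO : ∀ x, x ≠ u1 → x ≠ u2 → c' x = c x := by
    intro x h1 h2; simp [hc'def, h1, h2]
  refine ⟨c', ⟨?_, ?_⟩⟩
  · intro v
    by_cases hv1 : v = u1
    · subst hv1; rw [e1]; right; rfl
    by_cases hv2 : v = u2
    · subst hv2; rw [e2]; left; rfl
    · rw [eO v hv1 hv2]; exact hc.1 v
  intro v
  by_cases hv1 : v = u1
  · subst hv1
    have hemp : {w | G.Adj v w ∧ c' w = c' v} = ∅ := by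
      rw [Set.eq_empty_iff_forall_notMem]
      rintro w ⟨hadj, hcol⟩
      rw [e1] at hcol
      rcases hN1 w hadj with rfl | rfl
      · rw [e2] at hcol; omega
      · rw [eO w ne61 ne26.symm, hc6] at hcol; omega
    rw [hemp, Set.ncard_empty, e1]; omega
  by_cases hv2 : v = u2
  · subst hv2
    have hemp : {w | G.Adj v w ∧ c' w = c' v} = ∅ := by
      rw [Set.eq_empty_iff_forall_notMem]
      rintro w ⟨hadj, hcol⟩
      rw [e2] at hcol
      by_cases hw1 : w = u1
      · subst hw1; rw [e1] at hcol; omega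
      · have hw2 : w ≠ v := G.ne_of_adj hadj |>.symm
        rw [eO w hw1 hw2] at hcol
        rw [hAll w ⟨hadj, ne21, hw1⟩] at hcol; omega
    rw [hemp, Set.ncard_empty, e2]; omega
  · rw [eO v hv1 hv2]
    have hsub : {w | G.Adj v w ∧ c' w = c v} ⊆
        {w | (deleteVert G u1).Adj v w ∧ c w = c v} := by
      rintro w ⟨hadj, hcol⟩
      by_cases hw1 : w = u1
      · subst hw1
        rw [e1] at hcol
        exfalso
        rcases hN1 v hadj.symm with rfl | rfl
        · exact hv2 rfl
        · rw [hc6] at hcol; omega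
      by_cases hw2 : w = u2
      · subst hw2
        rw [e2] at hcol
        exfalso
        have : c v = 4 := hAll v ⟨hadj.symm, ne21, hv1⟩
        omega
      · exact ⟨⟨hadj, hv1, hw1⟩, by rwa [eO w hw1 hw2] at hcol⟩
    exact le_trans (Set.ncard_le_ncard hsub (Set.toFinite _)) (hc.2 v)

lemma L_UP2 (G : SimpleGraph V) (u1 u2 u3 u6 : V) (c : V → ℕ)
    (hc : IsColoring34 (deleteVert G u1) c)
    (hN1 : ∀ x, G.Adj u1 x → x = u2 ∨ x = u6)
    (ne21 : u2 ≠ u1) (ne61 : u6 ≠ u1) (ne26 : u2 ≠ u6)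
    (ne31 : u3 ≠ u1) (ne32 : u3 ≠ u2)
    (hn31 : ¬ G.Adj u3 u1)
    (hc2 : c u2 = 3) (hc6 : c u6 = 4)
    (hNH2 : {x | (deleteVert G u1).Adj u2 x}.ncard ≤ 4)
    (hT : ∀ x, (deleteVert G u1).Adj u2 x → x ≠ u3 → (c x = 3 ∨ degN G x ≤ 2))
    (hu3 : c u3 = 3 ∨ (c u3 = 4 ∧ {w | (deleteVert G u1).Adj u3 w ∧ c w = c u3}.ncard ≤ 3)) :
    Colorable34 G := by
  classical
  set c' : V → ℕ := fun x => if x = u1 then 3 else if x = u2 then 4 else c x with hc'def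
  have e1 : c' u1 = 3 := by simp [hc'def, ne21.symm]
  have e2 : c' u2 = 4 := by simp [hc'def, ne21]
  have eO : ∀ x, x ≠ u1 → x ≠ u2 → c' x = c x := by
    intro x h1 h2; simp [hc'def, h1, h2]
  refine ⟨c', ⟨?_, ?_⟩⟩
  · intro v
    by_cases hv1 : v = u1
    · subst hv1; rw [e1]; left; rfl
    by_cases hv2 : v = u2
    · subst hv2; rw [e2]; right; rfl
    · rw [eO v hv1 hv2]; exact hc.1 v
  intro v
  by_cases hv1 : v = u1
  · subst hv1
    have hemp : {w | G.Adj v w ∧ c' w = c' v} = ∅ := by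
      rw [Set.eq_empty_iff_forall_notMem]
      rintro w ⟨hadj, hcol⟩
      rw [e1] at hcol
      rcases hN1 w hadj with rfl | rfl
      · rw [e2] at hcol; omega
      · rw [eO w ne61 ne26.symm, hc6] at hcol; omega
    rw [hemp, Set.ncard_empty, e1]; omega
  by_cases hv2 : v = u2
  · subst hv2
    rw [e2]
    have hsub : {w | G.Adj v w ∧ c' w = 4} ⊆ {x | (deleteVert G u1).Adj v x} := by
      rintro w ⟨hadj, hcol⟩
      have hw1 : w ≠ u1 := by rintro rfl; rw [e1] at hcol; omega
      exact ⟨hadj, ne21, hw1⟩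
    exact le_trans (Set.ncard_le_ncard hsub (Set.toFinite _)) hNH2
  by_cases hv3 : v = u3
  · subst hv3
    rcases hu3 with h3 | ⟨h4, hcnt⟩
    · have ev : c' v = c v := eO v hv1 hv2
      rw [ev]
      have hsub : {w | G.Adj v w ∧ c' w = c v} ⊆
          {w | (deleteVert G u1).Adj v w ∧ c w = c v} := by
        rintro w ⟨hadj, hcol⟩
        have hw1 : w ≠ u1 := by rintro rfl; exact hn31 hadj
        have hw2 : w ≠ u2 := by
          rintro rfl; rw [e2] at hcol; omega
        exact ⟨⟨hadj, hv1, hw1⟩, by rwa [eO w hw1 hw2] at hcol⟩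
      exact le_trans (Set.ncard_le_ncard hsub (Set.toFinite _)) (hc.2 v)
    · have ev : c' v = c v := eO v hv1 hv2
      rw [ev]
      have hsub : {w | G.Adj v w ∧ c' w = c v} ⊆
          insert u2 {w | (deleteVert G u1).Adj v w ∧ c w = c v} := by
        rintro w ⟨hadj, hcol⟩
        have hw1 : w ≠ u1 := by rintro rfl; exact hn31 hadj
        by_cases hw2 : w = u2
        · subst hw2; exact Set.mem_insert _ _
        · exact Set.mem_insert_of_mem _ ⟨⟨hadj, hv1, hw1⟩, by rwa [eO w hw1 hw2] at hcol⟩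
      have hb := Set.ncard_le_ncard hsub (Set.toFinite _)
      have hi := Set.ncard_insert_le u2 {w | (deleteVert G u1).Adj v w ∧ c w = c v}
      omega
  by_cases hdeg : degN G v ≤ 2
  · have ev : c' v = c v := eO v hv1 hv2
    rw [ev]
    have hsub : {w | G.Adj v w ∧ c' w = c v} ⊆ {w | G.Adj v w} := fun w hw => hw.1
    have hb := Set.ncard_le_ncard hsub (Set.toFinite _)
    have : {w | G.Adj v w}.ncard = degN G v := rfl
    rcases hc.1 v with h | h <;> omega
  · have ev : c' v = c v := eO v hv1 hv2
    rw [ev]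
    have hsub : {w | G.Adj v w ∧ c' w = c v} ⊆
        {w | (deleteVert G u1).Adj v w ∧ c w = c v} := by
      rintro w ⟨hadj, hcol⟩
      by_cases hw1 : w = u1
      · subst hw1
        rw [e1] at hcol
        exfalso
        rcases hN1 v hadj.symm with rfl | rfl
        · exact hv2 rfl
        · rw [hc6] at hcol; omega
      by_cases hw2 : w = u2
      · subst hw2
        rw [e2] at hcol
        exfalso
        rcases hT v ⟨hadj.symm, ne21, hv1⟩ hv3 with h | h
        · omega
        · exact hdeg h
      · exact ⟨⟨hadj, hv1, hw1⟩, by rwa [eO w hw1 hw2] at hcol⟩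
    exact le_trans (Set.ncard_le_ncard hsub (Set.toFinite _)) (hc.2 v)

lemma L_UP6 (G : SimpleGraph V) (u1 u2 u6 : V) (c : V → ℕ)
    (hc : IsColoring34 (deleteVert G u1) c)
    (hN1 : ∀ x, G.Adj u1 x → x = u2 ∨ x = u6)
    (ne21 : u2 ≠ u1) (ne61 : u6 ≠ u1) (ne26 : u2 ≠ u6)
    (hc2 : c u2 = 3)
    (hn3cnt : {x | (deleteVert G u1).Adj u6 x ∧ c x = 3}.ncard ≤ 3)
    (hgain : ∀ x, (deleteVert G u1).Adj u6 x → c x = 3 →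
      (degN G x ≤ 2 ∨ {w | (deleteVert G u1).Adj x w ∧ c w = c x}.ncard ≤ 2)) :
    Colorable34 G := by
  classical
  set c' : V → ℕ := fun x => if x = u1 then 4 else if x = u6 then 3 else c x with hc'def
  have e1 : c' u1 = 4 := by simp [hc'def, ne61.symm]
  have e6 : c' u6 = 3 := by simp [hc'def, ne61]
  have eO : ∀ x, x ≠ u1 → x ≠ u6 → c' x = c x := by
    intro x h1 h2; simp [hc'def, h1, h2]
  refine ⟨c', ⟨?_, ?_⟩⟩
  · intro v
    by_cases hv1 : v = u1
    · subst hv1; rw [e1]; right; rfl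
    by_cases hv6 : v = u6
    · subst hv6; rw [e6]; left; rfl
    · rw [eO v hv1 hv6]; exact hc.1 v
  intro v
  by_cases hv1 : v = u1
  · subst hv1
    have hemp : {w | G.Adj v w ∧ c' w = c' v} = ∅ := by
      rw [Set.eq_empty_iff_forall_notMem]
      rintro w ⟨hadj, hcol⟩
      rw [e1] at hcol
      rcases hN1 w hadj with rfl | rfl
      · rw [eO w ne21 ne26, hc2] at hcol; omega
      · rw [e6] at hcol; omega
    rw [hemp, Set.ncard_empty, e1]; omega
  by_cases hv6 : v = u6
  · subst hv6
    rw [e6]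
    have hsub : {w | G.Adj v w ∧ c' w = 3} ⊆
        {x | (deleteVert G u1).Adj v x ∧ c x = 3} := by
      rintro w ⟨hadj, hcol⟩
      have hw1 : w ≠ u1 := by rintro rfl; rw [e1] at hcol; omega
      have hw6 : w ≠ v := (G.ne_of_adj hadj).symm
      rw [eO w hw1 hw6] at hcol
      exact ⟨⟨hadj, ne61, hw1⟩, hcol⟩
    exact le_trans (Set.ncard_le_ncard hsub (Set.toFinite _)) hn3cnt
  by_cases hgv : (deleteVert G u1).Adj u6 v ∧ c v = 3
  · rw [eO v hv1 hv6]
    rcases hgain v hgv.1 hgv.2 with hdeg | hcnt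
    · have hsub : {w | G.Adj v w ∧ c' w = c v} ⊆ {w | G.Adj v w} := fun w hw => hw.1
      have hb := Set.ncard_le_ncard hsub (Set.toFinite _)
      have hd : {w | G.Adj v w}.ncard = degN G v := rfl
      rcases hc.1 v with h | h <;> omega
    · have hsub : {w | G.Adj v w ∧ c' w = c v} ⊆
          insert u6 {w | (deleteVert G u1).Adj v w ∧ c w = c v} := by
        rintro w ⟨hadj, hcol⟩
        have hw1 : w ≠ u1 := by
          rintro rfl; rw [e1, hgv.2] at hcol; omega
        by_cases hw6 : w = u6
        · subst hw6; exact Set.mem_insert _ _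
        · exact Set.mem_insert_of_mem _ ⟨⟨hadj, hv1, hw1⟩, by rwa [eO w hw1 hw6] at hcol⟩
      have hb := Set.ncard_le_ncard hsub (Set.toFinite _)
      have hi := Set.ncard_insert_le u6 {w | (deleteVert G u1).Adj v w ∧ c w = c v}
      have hcv := hgv.2
      omega
  · rw [eO v hv1 hv6]
    have hsub : {w | G.Adj v w ∧ c' w = c v} ⊆
        {w | (deleteVert G u1).Adj v w ∧ c w = c v} := by
      rintro w ⟨hadj, hcol⟩
      by_cases hw1 : w = u1
      · subst hw1
        rw [e1] at hcol
        exfalso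
        rcases hN1 v hadj.symm with rfl | rfl
        · rw [hc2] at hcol; omega
        · exact hv6 rfl
      by_cases hw6 : w = u6
      · subst hw6
        rw [e6] at hcol
        exact absurd ⟨⟨hadj.symm, ne61, hv1⟩, hcol.symm⟩ hgv
      · exact ⟨⟨hadj, hv1, hw1⟩, by rwa [eO w hw1 hw6] at hcol⟩
    exact le_trans (Set.ncard_le_ncard hsub (Set.toFinite _)) (hc.2 v)

lemma L_A (G : SimpleGraph V) (u1 u2 u3 u6 : V) (c : V → ℕ)
    (hc : IsColoring34 (deleteVert G u1) c)
    (hN1 : ∀ x, G.Adj u1 x → x = u2 ∨ x = u6)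
    (ne21 : u2 ≠ u1) (ne61 : u6 ≠ u1) (ne26 : u2 ≠ u6)
    (ne31 : u3 ≠ u1) (ne32 : u3 ≠ u2) (ne36 : u3 ≠ u6)
    (hn31 : ¬ G.Adj u3 u1) (hn26 : ¬ G.Adj u2 u6) (hn36 : ¬ G.Adj u3 u6)
    (hc2 : c u2 = 3) (hc6 : c u6 = 4)
    (hT : ∀ x, (deleteVert G u1).Adj u2 x → x ≠ u3 → c x = 3)
    (hF : ∀ x, G.Adj u3 x → x ≠ u2 → c x = 4) :
    Colorable34 G := by
  classical
  set c' : V → ℕ := fun x => if x = u1 then 3 else if x = u2 then 4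
    else if x = u3 then 3 else c x with hc'def
  have e1 : c' u1 = 3 := by simp [hc'def, ne21.symm]
  have e2 : c' u2 = 4 := by simp [hc'def, ne21]
  have e3 : c' u3 = 3 := by simp [hc'def, ne31, ne32]
  have eO : ∀ x, x ≠ u1 → x ≠ u2 → x ≠ u3 → c' x = c x := by
    intro x h1 h2 h3; simp [hc'def, h1, h2, h3]
  refine ⟨c', ⟨?_, ?_⟩⟩
  · intro v
    by_cases hv1 : v = u1
    · subst hv1; rw [e1]; left; rfl
    by_cases hv2 : v = u2
    · subst hv2; rw [e2]; right; rfl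
    by_cases hv3 : v = u3
    · subst hv3; rw [e3]; left; rfl
    · rw [eO v hv1 hv2 hv3]; exact hc.1 v
  intro v
  by_cases hv1 : v = u1
  · subst hv1
    have hemp : {w | G.Adj v w ∧ c' w = c' v} = ∅ := by
      rw [Set.eq_empty_iff_forall_notMem]
      rintro w ⟨hadj, hcol⟩
      rw [e1] at hcol
      rcases hN1 w hadj with rfl | rfl
      · rw [e2] at hcol; omega
      · rw [eO w ne61 ne26.symm ne36.symm, hc6] at hcol; omega
    rw [hemp, Set.ncard_empty, e1]; omega
  by_cases hv2 : v = u2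
  · subst hv2
    have hemp : {w | G.Adj v w ∧ c' w = c' v} = ∅ := by
      rw [Set.eq_empty_iff_forall_notMem]
      rintro w ⟨hadj, hcol⟩
      rw [e2] at hcol
      by_cases hw1 : w = u1
      · subst hw1; rw [e1] at hcol; omega
      by_cases hw3 : w = u3
      · subst hw3; rw [e3] at hcol; omega
      · have hw2 : w ≠ v := (G.ne_of_adj hadj).symm
        rw [eO w hw1 hw2 hw3, hT w ⟨hadj, ne21, hw1⟩ hw3] at hcol; omega
    rw [hemp, Set.ncard_empty, e2]; omega
  by_cases hv3 : v = u3
  · subst hv3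
    have hemp : {w | G.Adj v w ∧ c' w = c' v} = ∅ := by
      rw [Set.eq_empty_iff_forall_notMem]
      rintro w ⟨hadj, hcol⟩
      rw [e3] at hcol
      have hw1 : w ≠ u1 := by rintro rfl; exact hn31 hadj
      by_cases hw2 : w = u2
      · subst hw2; rw [e2] at hcol; omega
      · have hw3 : w ≠ v := (G.ne_of_adj hadj).symm
        rw [eO w hw1 hw2 hw3, hF w hadj hw2] at hcol; omega
    rw [hemp, Set.ncard_empty, e3]; omega
  by_cases hv6 : v = u6
  · subst hv6
    rw [eO v ne61 ne26.symm ne36.symm]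
    have hsub : {w | G.Adj v w ∧ c' w = c v} ⊆
        {w | (deleteVert G u1).Adj v w ∧ c w = c v} := by
      rintro w ⟨hadj, hcol⟩
      rw [hc6] at hcol
      by_cases hw1 : w = u1
      · subst hw1; rw [e1] at hcol; omega
      by_cases hw2 : w = u2
      · subst hw2; exact absurd hadj.symm hn26
      by_cases hw3 : w = u3
      · subst hw3; exact absurd hadj.symm hn36
      · rw [eO w hw1 hw2 hw3] at hcol
        exact ⟨⟨hadj, ne61, hw1⟩, by rw [hcol, hc6]⟩
    exact le_trans (Set.ncard_le_ncard hsub (Set.toFinite _)) (hc.2 v)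
  by_cases hA2 : G.Adj u2 v
  · have hvc : c v = 3 := hT v ⟨hA2, ne21, hv1⟩ hv3
    rw [eO v hv1 hv2 hv3]
    have hsub : {w | G.Adj v w ∧ c' w = c v} ⊆
        {w | (deleteVert G u1).Adj v w ∧ c w = c v} := by
      rintro w ⟨hadj, hcol⟩
      rw [hvc] at hcol
      by_cases hw1 : w = u1
      · subst hw1
        exfalso
        rcases hN1 v hadj.symm with rfl | rfl
        · exact hv2 rfl
        · exact hv6 rfl
      by_cases hw2 : w = u2
      · subst hw2; rw [e2] at hcol; omega
      by_cases hw3 : w = u3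
      · subst hw3
        exfalso
        have := hF v hadj.symm hv2
        omega
      · rw [eO w hw1 hw2 hw3] at hcol
        exact ⟨⟨hadj, hv1, hw1⟩, by rw [hcol, hvc]⟩
    exact le_trans (Set.ncard_le_ncard hsub (Set.toFinite _)) (hc.2 v)
  by_cases hA3 : G.Adj u3 v
  · have hvc : c v = 4 := hF v hA3 hv2
    rw [eO v hv1 hv2 hv3]
    have hsub : {w | G.Adj v w ∧ c' w = c v} ⊆
        {w | (deleteVert G u1).Adj v w ∧ c w = c v} := by
      rintro w ⟨hadj, hcol⟩
      rw [hvc] at hcol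
      by_cases hw1 : w = u1
      · subst hw1; rw [e1] at hcol; omega
      by_cases hw2 : w = u2
      · subst hw2
        exfalso
        have := hT v ⟨hadj.symm, ne21, hv1⟩ hv3
        omega
      by_cases hw3 : w = u3
      · subst hw3; rw [e3] at hcol; omega
      · rw [eO w hw1 hw2 hw3] at hcol
        exact ⟨⟨hadj, hv1, hw1⟩, by rw [hcol, hvc]⟩
    exact le_trans (Set.ncard_le_ncard hsub (Set.toFinite _)) (hc.2 v)
  · rw [eO v hv1 hv2 hv3]
    have hsub : {w | G.Adj v w ∧ c' w = c v} ⊆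
        {w | (deleteVert G u1).Adj v w ∧ c w = c v} := by
      rintro w ⟨hadj, hcol⟩
      by_cases hw1 : w = u1
      · subst hw1
        exfalso
        rcases hN1 v hadj.symm with rfl | rfl
        · exact hv2 rfl
        · exact hv6 rfl
      by_cases hw2 : w = u2
      · subst hw2; exact absurd hadj.symm hA2
      by_cases hw3 : w = u3
      · subst hw3; exact absurd hadj.symm hA3
      · exact ⟨⟨hadj, hv1, hw1⟩, by rwa [eO w hw1 hw2 hw3] at hcol⟩
    exact le_trans (Set.ncard_le_ncard hsub (Set.toFinite _)) (hc.2 v)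

lemma L_C2 (G : SimpleGraph V) (u1 u2 u4 u5 u6 : V) (c : V → ℕ)
    (hc : IsColoring34 (deleteVert G u1) c)
    (hN1 : ∀ x, G.Adj u1 x → x = u2 ∨ x = u6)
    (ne21 : u2 ≠ u1) (ne61 : u6 ≠ u1) (ne26 : u2 ≠ u6) (ne25 : u2 ≠ u5)
    (ne41 : u4 ≠ u1) (ne45 : u4 ≠ u5) (ne46 : u4 ≠ u6) (ne51 : u5 ≠ u1) (ne56 : u5 ≠ u6)
    (hn41 : ¬ G.Adj u4 u1) (hn51 : ¬ G.Adj u5 u1) (hn46 : ¬ G.Adj u4 u6)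
    (hc2 : c u2 = 3) (hc5 : c u5 = 3)
    (hB4 : ∀ x, (deleteVert G u1).Adj u6 x → x ≠ u5 → c x = 4)
    (hu4 : c u4 = 3 ∨ (c u4 = 4 ∧ {w | (deleteVert G u1).Adj u4 w ∧ c w = c u4}.ncard ≤ 3))
    (hQdeg : ∀ x, G.Adj u5 x → x ≠ u4 → x ≠ u6 → degN G x ≤ 2)
    (hcnt5 : {w | G.Adj u5 w ∧ w ≠ u6}.ncard ≤ 4) :
    Colorable34 G := by
  classical
  set c' : V → ℕ := fun x => if x = u1 then 4 else if x = u5 then 4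
    else if x = u6 then 3 else c x with hc'def
  have e1 : c' u1 = 4 := by simp [hc'def]
  have e5 : c' u5 = 4 := by simp [hc'def, ne51]
  have e6 : c' u6 = 3 := by simp [hc'def, ne61, ne56.symm]
  have eO : ∀ x, x ≠ u1 → x ≠ u5 → x ≠ u6 → c' x = c x := by
    intro x h1 h5 h6; simp [hc'def, h1, h5, h6]
  refine ⟨c', ⟨?_, ?_⟩⟩
  · intro v
    by_cases hv1 : v = u1
    · subst hv1; rw [e1]; right; rfl
    by_cases hv5 : v = u5
    · subst hv5; rw [e5]; right; rfl
    by_cases hv6 : v = u6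
    · subst hv6; rw [e6]; left; rfl
    · rw [eO v hv1 hv5 hv6]; exact hc.1 v
  intro v
  by_cases hv1 : v = u1
  · subst hv1
    have hemp : {w | G.Adj v w ∧ c' w = c' v} = ∅ := by
      rw [Set.eq_empty_iff_forall_notMem]
      rintro w ⟨hadj, hcol⟩
      rw [e1] at hcol
      rcases hN1 w hadj with rfl | rfl
      · rw [eO w ne21 ne25 ne26, hc2] at hcol; omega
      · rw [e6] at hcol; omega
    rw [hemp, Set.ncard_empty, e1]; omega
  by_cases hv5 : v = u5
  · subst hv5
    rw [e5]
    have hsub : {w | G.Adj v w ∧ c' w = 4} ⊆ {w | G.Adj v w ∧ w ≠ u6} := by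
      rintro w ⟨hadj, hcol⟩
      refine ⟨hadj, ?_⟩
      rintro rfl; rw [e6] at hcol; omega
    exact le_trans (Set.ncard_le_ncard hsub (Set.toFinite _)) hcnt5
  by_cases hv6 : v = u6
  · subst hv6
    have hemp : {w | G.Adj v w ∧ c' w = c' v} = ∅ := by
      rw [Set.eq_empty_iff_forall_notMem]
      rintro w ⟨hadj, hcol⟩
      rw [e6] at hcol
      by_cases hw1 : w = u1
      · subst hw1; rw [e1] at hcol; omega
      by_cases hw5 : w = u5
      · subst hw5; rw [e5] at hcol; omega
      · have hw6 : w ≠ v := (G.ne_of_adj hadj).symm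
        rw [eO w hw1 hw5 hw6, hB4 w ⟨hadj, ne61, hw1⟩ hw5] at hcol; omega
    rw [hemp, Set.ncard_empty, e6]; omega
  by_cases hv4 : v = u4
  · subst hv4
    rcases hu4 with h3 | ⟨h4, hcnt⟩
    · rw [eO v ne41 ne45 ne46]
      have hsub : {w | G.Adj v w ∧ c' w = c v} ⊆
          {w | (deleteVert G u1).Adj v w ∧ c w = c v} := by
        rintro w ⟨hadj, hcol⟩
        rw [h3] at hcol
        have hw1 : w ≠ u1 := by rintro rfl; exact hn41 hadj
        have hw6 : w ≠ u6 := by rintro rfl; exact hn46 hadj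
        by_cases hw5 : w = u5
        · subst hw5; rw [e5] at hcol; omega
        · rw [eO w hw1 hw5 hw6] at hcol
          exact ⟨⟨hadj, ne41, hw1⟩, by rw [hcol, h3]⟩
      exact le_trans (Set.ncard_le_ncard hsub (Set.toFinite _)) (hc.2 v)
    · rw [eO v ne41 ne45 ne46]
      have hsub : {w | G.Adj v w ∧ c' w = c v} ⊆
          insert u5 {w | (deleteVert G u1).Adj v w ∧ c w = c v} := by
        rintro w ⟨hadj, hcol⟩
        have hw1 : w ≠ u1 := by rintro rfl; exact hn41 hadj
        have hw6 : w ≠ u6 := by rintro rfl; exact hn46 hadj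
        by_cases hw5 : w = u5
        · subst hw5; exact Set.mem_insert _ _
        · exact Set.mem_insert_of_mem _ ⟨⟨hadj, ne41, hw1⟩, by rwa [eO w hw1 hw5 hw6] at hcol⟩
      have hb := Set.ncard_le_ncard hsub (Set.toFinite _)
      have hi := Set.ncard_insert_le u5 {w | (deleteVert G u1).Adj v w ∧ c w = c v}
      omega
  by_cases hA5 : G.Adj u5 v
  · have hv5' : v ≠ u5 := hv5
    have hvd : degN G v ≤ 2 := hQdeg v hA5 (by rintro rfl; exact hv4 rfl) hv6
    have hvne1 : v ≠ u1 := hv1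
    rw [eO v hv1 hv5 hv6]
    have hsub : {w | G.Adj v w ∧ c' w = c v} ⊆ {w | G.Adj v w} := fun w hw => hw.1
    have hb := Set.ncard_le_ncard hsub (Set.toFinite _)
    have hd : {w | G.Adj v w}.ncard = degN G v := rfl
    rcases hc.1 v with h | h <;> omega
  · rw [eO v hv1 hv5 hv6]
    have hsub : {w | G.Adj v w ∧ c' w = c v} ⊆
        {w | (deleteVert G u1).Adj v w ∧ c w = c v} := by
      rintro w ⟨hadj, hcol⟩
      by_cases hw1 : w = u1
      · subst hw1
        rw [e1] at hcol
        exfalso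
        rcases hN1 v hadj.symm with rfl | rfl
        · rw [hc2] at hcol; omega
        · exact hv6 rfl
      by_cases hw5 : w = u5
      · subst hw5; exact absurd hadj.symm hA5
      by_cases hw6 : w = u6
      · subst hw6
        rw [e6] at hcol
        have := hB4 v ⟨hadj.symm, ne61, hv1⟩ hv5
        omega
      · exact ⟨⟨hadj, hv1, hw1⟩, by rwa [eO w hw1 hw5 hw6] at hcol⟩
    exact le_trans (Set.ncard_le_ncard hsub (Set.toFinite _)) (hc.2 v)

lemma L_C3 (G : SimpleGraph V) (u1 u2 u4 u5 u6 : V) (c : V → ℕ)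
    (hc : IsColoring34 (deleteVert G u1) c)
    (hN1 : ∀ x, G.Adj u1 x → x = u2 ∨ x = u6)
    (ne21 : u2 ≠ u1) (ne61 : u6 ≠ u1) (ne26 : u2 ≠ u6) (ne25 : u2 ≠ u5) (ne24 : u2 ≠ u4)
    (ne41 : u4 ≠ u1) (ne45 : u4 ≠ u5) (ne46 : u4 ≠ u6) (ne51 : u5 ≠ u1) (ne56 : u5 ≠ u6)
    (hn41 : ¬ G.Adj u4 u1) (hn51 : ¬ G.Adj u5 u1) (hn46 : ¬ G.Adj u4 u6)
    (hTri45 : ∀ x, G.Adj u4 x → G.Adj u5 x → False) (hn24 : ¬ G.Adj u2 u4)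
    (hc2 : c u2 = 3)
    (hR4 : ∀ x, G.Adj u4 x → x ≠ u5 → c x = 4)
    (hB4 : ∀ x, (deleteVert G u1).Adj u6 x → x ≠ u5 → c x = 4)
    (hQdeg : ∀ x, G.Adj u5 x → x ≠ u4 → x ≠ u6 → degN G x ≤ 2)
    (hcnt5 : {w | G.Adj u5 w ∧ w ≠ u4 ∧ w ≠ u6}.ncard ≤ 4) :
    Colorable34 G := by
  classical
  set c' : V → ℕ := fun x => if x = u1 then 4 else if x = u4 then 3
    else if x = u5 then 4 else if x = u6 then 3 else c x with hc'def
  have e1 : c' u1 = 4 := by simp [hc'def]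
  have e4 : c' u4 = 3 := by simp [hc'def, ne41]
  have e5 : c' u5 = 4 := by simp [hc'def, ne51, ne45.symm]
  have e6 : c' u6 = 3 := by simp [hc'def, ne61, ne46.symm, ne56.symm]
  have eO : ∀ x, x ≠ u1 → x ≠ u4 → x ≠ u5 → x ≠ u6 → c' x = c x := by
    intro x h1 h4 h5 h6; simp [hc'def, h1, h4, h5, h6]
  refine ⟨c', ⟨?_, ?_⟩⟩
  · intro v
    by_cases hv1 : v = u1
    · subst hv1; rw [e1]; right; rfl
    by_cases hv4 : v = u4
    · subst hv4; rw [e4]; left; rfl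
    by_cases hv5 : v = u5
    · subst hv5; rw [e5]; right; rfl
    by_cases hv6 : v = u6
    · subst hv6; rw [e6]; left; rfl
    · rw [eO v hv1 hv4 hv5 hv6]; exact hc.1 v
  intro v
  by_cases hv1 : v = u1
  · subst hv1
    have hemp : {w | G.Adj v w ∧ c' w = c' v} = ∅ := by
      rw [Set.eq_empty_iff_forall_notMem]
      rintro w ⟨hadj, hcol⟩
      rw [e1] at hcol
      rcases hN1 w hadj with rfl | rfl
      · rw [eO w ne21 ne24 ne25 ne26, hc2] at hcol; omega
      · rw [e6] at hcol; omega
    rw [hemp, Set.ncard_empty, e1]; omega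
  by_cases hv4 : v = u4
  · subst hv4
    have hemp : {w | G.Adj v w ∧ c' w = c' v} = ∅ := by
      rw [Set.eq_empty_iff_forall_notMem]
      rintro w ⟨hadj, hcol⟩
      rw [e4] at hcol
      have hw1 : w ≠ u1 := by rintro rfl; exact hn41 hadj
      have hw6 : w ≠ u6 := by rintro rfl; exact hn46 hadj
      have hw4 : w ≠ v := (G.ne_of_adj hadj).symm
      by_cases hw5 : w = u5
      · subst hw5; rw [e5] at hcol; omega
      · rw [eO w hw1 hw4 hw5 hw6, hR4 w hadj hw5] at hcol; omega
    rw [hemp, Set.ncard_empty, e4]; omega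
  by_cases hv5 : v = u5
  · subst hv5
    rw [e5]
    have hsub : {w | G.Adj v w ∧ c' w = 4} ⊆ {w | G.Adj v w ∧ w ≠ u4 ∧ w ≠ u6} := by
      rintro w ⟨hadj, hcol⟩
      refine ⟨hadj, ?_, ?_⟩
      · rintro rfl; rw [e4] at hcol; omega
      · rintro rfl; rw [e6] at hcol; omega
    exact le_trans (Set.ncard_le_ncard hsub (Set.toFinite _)) hcnt5
  by_cases hv6 : v = u6
  · subst hv6
    have hemp : {w | G.Adj v w ∧ c' w = c' v} = ∅ := by
      rw [Set.eq_empty_iff_forall_notMem]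
      rintro w ⟨hadj, hcol⟩
      rw [e6] at hcol
      by_cases hw1 : w = u1
      · subst hw1; rw [e1] at hcol; omega
      have hw4 : w ≠ u4 := by rintro rfl; exact hn46 hadj.symm
      by_cases hw5 : w = u5
      · subst hw5; rw [e5] at hcol; omega
      · have hw6 : w ≠ v := (G.ne_of_adj hadj).symm
        rw [eO w hw1 hw4 hw5 hw6, hB4 w ⟨hadj, ne61, hw1⟩ hw5] at hcol; omega
    rw [hemp, Set.ncard_empty, e6]; omega
  by_cases hA4 : G.Adj u4 v
  · have hvc : c v = 4 := hR4 v hA4 hv5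
    rw [eO v hv1 hv4 hv5 hv6]
    have hsub : {w | G.Adj v w ∧ c' w = c v} ⊆
        {w | (deleteVert G u1).Adj v w ∧ c w = c v} := by
      rintro w ⟨hadj, hcol⟩
      rw [hvc] at hcol
      by_cases hw1 : w = u1
      · subst hw1
        exfalso
        rcases hN1 v hadj.symm with rfl | rfl
        · exact hn24 hA4.symm
        · exact hv6 rfl
      by_cases hw4 : w = u4
      · subst hw4; rw [e4] at hcol; omega
      by_cases hw5 : w = u5
      · subst hw5; exact (hTri45 v hA4 hadj.symm).elim
      by_cases hw6 : w = u6
      · subst hw6; rw [e6] at hcol; omega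
      · rw [eO w hw1 hw4 hw5 hw6] at hcol
        exact ⟨⟨hadj, hv1, hw1⟩, by rw [hcol, hvc]⟩
    exact le_trans (Set.ncard_le_ncard hsub (Set.toFinite _)) (hc.2 v)
  by_cases hA5 : G.Adj u5 v
  · have hvd : degN G v ≤ 2 := hQdeg v hA5 (by rintro rfl; exact hv4 rfl) hv6
    rw [eO v hv1 hv4 hv5 hv6]
    have hsub : {w | G.Adj v w ∧ c' w = c v} ⊆ {w | G.Adj v w} := fun w hw => hw.1
    have hb := Set.ncard_le_ncard hsub (Set.toFinite _)
    have hd : {w | G.Adj v w}.ncard = degN G v := rfl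
    rcases hc.1 v with h | h <;> omega
  · rw [eO v hv1 hv4 hv5 hv6]
    have hsub : {w | G.Adj v w ∧ c' w = c v} ⊆
        {w | (deleteVert G u1).Adj v w ∧ c w = c v} := by
      rintro w ⟨hadj, hcol⟩
      by_cases hw1 : w = u1
      · subst hw1
        rw [e1] at hcol
        exfalso
        rcases hN1 v hadj.symm with rfl | rfl
        · rw [hc2] at hcol; omega
        · exact hv6 rfl
      by_cases hw4 : w = u4
      · subst hw4; exact absurd hadj.symm hA4
      by_cases hw5 : w = u5
      · subst hw5; exact absurd hadj.symm hA5
      by_cases hw6 : w = u6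
      · subst hw6
        rw [e6] at hcol
        have := hB4 v ⟨hadj.symm, ne61, hv1⟩ hv5
        omega
      · exact ⟨⟨hadj, hv1, hw1⟩, by rwa [eO w hw1 hw4 hw5 hw6] at hcol⟩
    exact le_trans (Set.ncard_le_ncard hsub (Set.toFinite _)) (hc.2 v)

lemma core_cfg (G : SimpleGraph V) (hG : MinNonColorable34 G) (hgirth : GirthAtLeast5 G)
    (u1 u2 u3 u4 u5 u6 : V)
    (ne12 : u1 ≠ u2) (ne13 : u1 ≠ u3) (ne14 : u1 ≠ u4) (ne15 : u1 ≠ u5) (ne16 : u1 ≠ u6)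
    (ne23 : u2 ≠ u3) (ne24 : u2 ≠ u4) (ne25 : u2 ≠ u5) (ne26 : u2 ≠ u6)
    (ne34 : u3 ≠ u4) (ne35 : u3 ≠ u5) (ne36 : u3 ≠ u6)
    (ne45 : u4 ≠ u5) (ne46 : u4 ≠ u6) (ne56 : u5 ≠ u6)
    (a12 : G.Adj u1 u2) (a23 : G.Adj u2 u3) (a34 : G.Adj u3 u4)
    (a45 : G.Adj u4 u5) (a56 : G.Adj u5 u6) (a61 : G.Adj u6 u1)
    (hdeg1 : degN G u1 = 2) (h5p2 : Is5p G u2)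
    (hdeg3 : 3 ≤ degN G u3) (hdeg4 : 3 ≤ degN G u4)
    (hdeg5 : 3 ≤ degN G u5) (hdeg6 : 3 ≤ degN G u6) :
    ¬ (Is5s G u3 ∨ Is6p G u3) ∧
      ¬ ((Is5s G u4 ∨ Is6p G u4) ∧ (Is5s G u5 ∨ Is6p G u5) ∧ (Is5s G u6 ∨ Is6p G u6)) := by
  classical
  obtain ⟨hncol, hdel, -⟩ := hG
  have tri := hgirth.1
  have quad := hgirth.2
  -- neighbours of u1
  have hN1 : ∀ x, G.Adj u1 x → x = u2 ∨ x = u6 := by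
    intro x hx
    have hsub : ({u2, u6} : Set V) ⊆ {w | G.Adj u1 w} := by
      rintro w (rfl | rfl)
      · exact a12
      · exact a61.symm
    have hle : ({w | G.Adj u1 w} : Set V).ncard ≤ ({u2, u6} : Set V).ncard := by
      rw [Set.ncard_pair ne26]
      exact le_of_eq hdeg1
    have heq := Set.eq_of_subset_of_ncard_le hsub hle (Set.toFinite _)
    have hx' : x ∈ {w | G.Adj u1 w} := hx
    rw [← heq] at hx'
    simpa using hx'
  -- nonadjacency facts
  have hn31 : ¬ G.Adj u3 u1 := tri u1 u2 u3 a12 a23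
  have hn26 : ¬ G.Adj u2 u6 := tri u6 u1 u2 a61 a12
  have hn42 : ¬ G.Adj u4 u2 := tri u2 u3 u4 a23 a34
  have hn24 : ¬ G.Adj u2 u4 := fun h => hn42 h.symm
  have hn53 : ¬ G.Adj u5 u3 := tri u3 u4 u5 a34 a45
  have hn64 : ¬ G.Adj u6 u4 := tri u4 u5 u6 a45 a56
  have hn46 : ¬ G.Adj u4 u6 := fun h => hn64 h.symm
  have hn52 : ¬ G.Adj u5 u2 := quad u2 u3 u4 u5 ne24 ne35 a23 a34 a45
  have hn63 : ¬ G.Adj u6 u3 := quad u3 u4 u5 u6 ne35 ne46 a34 a45 a56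
  have hn36 : ¬ G.Adj u3 u6 := fun h => hn63 h.symm
  have hn41 : ¬ G.Adj u4 u1 := by
    intro h
    rcases hN1 u4 h.symm with h' | h'
    · exact ne24 h'.symm
    · exact ne46 h'
  have hn51 : ¬ G.Adj u5 u1 := by
    intro h
    rcases hN1 u5 h.symm with h' | h'
    · exact ne25 h'.symm
    · exact ne56 h'
  have hTri45 : ∀ x, G.Adj u4 x → G.Adj u5 x → False :=
    fun x h4 h5 => tri x u4 u5 h4.symm a45 h5
  -- u2 structure
  obtain ⟨hd2, htpn2⟩ := h5p2
  have h3plus2 : ∀ x, G.Adj u2 x → x ≠ u3 → degN G x ≤ 2 := by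
    intro x hx hne
    by_contra hh
    push_neg at hh
    exact hne (tpn_unique htpn2 a23 hdeg3 hx hh)
  have hN2Hcard : {x | (deleteVert G u1).Adj u2 x}.ncard = 4 := by
    rw [NH_eq ne12.symm,
      Set.ncard_diff_singleton_of_mem (show u1 ∈ {x | G.Adj u2 x} from a12.symm)]
    have h5 : {x | G.Adj u2 x}.ncard = 5 := hd2
    omega
  obtain ⟨c, hc⟩ := hdel u1
  have hvals := hc.1
  -- d1 : different colours on u2, u6
  have d1 : c u2 ≠ c u6 := by
    intro h
    refine hncol (L_INS G u1 u2 u6 c hc hN1 ne26 (7 - c u2)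
      (by rcases hvals u2 with h' | h' <;> omega) ?_ ?_)
    · intro hh; exfalso; rcases hvals u2 with h' | h' <;> omega
    · intro hh; exfalso; rcases hvals u2 with h' | h' <;> omega
  -- d2 : c u2 = 3
  have d2 : c u2 = 3 := by
    by_contra hh
    have hc2 : c u2 = 4 := by rcases hvals u2 with h | h; exact absurd h hh; exact h
    have hc6 : c u6 = 3 := by
      rcases hvals u6 with h | h
      · exact h
      · exact absurd (hc2.trans h.symm) d1
    have hSat2 : {w | (deleteVert G u1).Adj u2 w ∧ c w = c u2}.ncard = 4 := by
      have hle := hc.2 u2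
      by_contra hne
      refine hncol (L_INS G u1 u2 u6 c hc hN1 ne26 4 (by right; rfl) ?_ ?_)
      · intro _; omega
      · intro hh'; exfalso; omega
    have hAll : ∀ x, (deleteVert G u1).Adj u2 x → c x = 4 := by
      have hsub : {w | (deleteVert G u1).Adj u2 w ∧ c w = c u2} ⊆
          {x | (deleteVert G u1).Adj u2 x} := fun w hw => hw.1
      have heq := Set.eq_of_subset_of_ncard_le hsub
        (by rw [hN2Hcard, hSat2]) (Set.toFinite _)
      intro x hx
      have hx' : x ∈ {w | (deleteVert G u1).Adj u2 w ∧ c w = c u2} := by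
        rw [heq]; exact hx
      rw [← hc2]; exact hx'.2
    exact hncol (L_SWAP2 G u1 u2 u6 c hc hN1 ne12.symm ne16.symm ne26 hc6 hAll)
  have d2' : c u6 = 4 := by
    rcases hvals u6 with h | h
    · exact absurd (d2.trans h.symm) d1
    · exact h
  -- d3 : u2 is 3-saturated
  have d3 : {w | (deleteVert G u1).Adj u2 w ∧ c w = c u2}.ncard = 3 := by
    have hle := hc.2 u2
    by_contra hne
    refine hncol (L_INS G u1 u2 u6 c hc hN1 ne26 3 (by left; rfl) ?_ ?_)
    · intro _; omega
    · intro hh'; exfalso; omega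
  have hH23 : (deleteVert G u1).Adj u2 u3 := ⟨a23, ne12.symm, ne13.symm⟩
  -- d4 : c u3 = 4
  have d4 : c u3 = 4 := by
    by_contra hh
    have h3 : c u3 = 3 := by rcases hvals u3 with h | h; exact h; exact absurd h hh
    refine hncol (L_UP2 G u1 u2 u3 u6 c hc hN1 ne12.symm ne16.symm ne26 ne13.symm ne23.symm
      hn31 d2 d2' (le_of_eq hN2Hcard) ?_ (Or.inl h3))
    intro x hx hxne
    right
    exact h3plus2 x hx.1 hxne
  -- hT : all other H-neighbours of u2 are coloured 3
  have hT : ∀ x, (deleteVert G u1).Adj u2 x → x ≠ u3 → c x = 3 := by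
    have hW1 : {x | (deleteVert G u1).Adj u2 x ∧ c x = 4}.ncard = 1 := by
      have hs : {x | (deleteVert G u1).Adj u2 x}.ncard =
          {x | (deleteVert G u1).Adj u2 x ∧ c x = 3}.ncard +
          {x | (deleteVert G u1).Adj u2 x ∧ c x = 4}.ncard := split34' hvals _
      have h3eq : {x | (deleteVert G u1).Adj u2 x ∧ c x = 3} =
          {w | (deleteVert G u1).Adj u2 w ∧ c w = c u2} := by rw [d2]
      rw [hN2Hcard, h3eq, d3] at hs
      omega
    have hu3W : u3 ∈ {x | (deleteVert G u1).Adj u2 x ∧ c x = 4} := ⟨hH23, d4⟩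
    have hWeq := Set.eq_of_subset_of_ncard_le (Set.singleton_subset_iff.mpr hu3W)
      (by rw [hW1, Set.ncard_singleton]) (Set.toFinite _)
    intro x hx hne
    rcases hvals x with h | h
    · exact h
    · exfalso
      have hx' : x ∈ ({u3} : Set V) := by rw [hWeq]; exact ⟨hx, h⟩
      exact hne (by simpa using hx')
  -- d5 : u3 is 4-saturated
  have d5 : {w | (deleteVert G u1).Adj u3 w ∧ c w = c u3}.ncard = 4 := by
    have hle := hc.2 u3
    by_contra hne
    refine hncol (L_UP2 G u1 u2 u3 u6 c hc hN1 ne12.symm ne16.symm ne26 ne13.symm ne23.symm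
      hn31 d2 d2' (le_of_eq hN2Hcard) ?_ (Or.inr ⟨d4, by omega⟩))
    intro x hx hxne
    right
    exact h3plus2 x hx.1 hxne
  -- d6 : u6 is 4-saturated
  have d6 : {w | (deleteVert G u1).Adj u6 w ∧ c w = c u6}.ncard = 4 := by
    have hle := hc.2 u6
    by_contra hne
    refine hncol (L_INS G u1 u2 u6 c hc hN1 ne26 4 (by right; rfl) ?_ ?_)
    · intro hh'; exfalso; omega
    · intro _; omega
  -- part 1 : u3 is not bad
  have notbad3 : ¬ (Is5s G u3 ∨ Is6p G u3) := by
    rintro (⟨hd3, htpn3⟩ | ⟨hd3, htpn3⟩)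
    · have hF : ∀ x, G.Adj u3 x → x ≠ u2 → c x = 4 := by
        have hsub : {w | (deleteVert G u1).Adj u3 w ∧ c w = c u3} ⊆
            {x | G.Adj u3 x} \ {u2} := by
          rintro w ⟨hw, hcw⟩
          refine ⟨hw.1, ?_⟩
          simp only [Set.mem_singleton_iff]
          rintro rfl
          rw [d2] at hcw
          rw [d4] at hcw
          omega
        have hcard : ({x | G.Adj u3 x} \ {u2}).ncard = 4 := by
          rw [Set.ncard_diff_singleton_of_mem (show u2 ∈ {x | G.Adj u3 x} from a23.symm)]
          have h5 : {x | G.Adj u3 x}.ncard = 5 := hd3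
          omega
        have heq := Set.eq_of_subset_of_ncard_le hsub (by rw [hcard, d5]) (Set.toFinite _)
        intro x hx hne
        have hx' : x ∈ {w | (deleteVert G u1).Adj u3 w ∧ c w = c u3} := by
          rw [heq]
          exact ⟨hx, by simpa using hne⟩
        rw [← d4]; exact hx'.2
      exact hncol (L_A G u1 u2 u3 u6 c hc hN1 ne12.symm ne16.symm ne26 ne13.symm ne23.symm
        ne36 hn31 hn26 hn36 d2 d2' hT hF)
    · have h2t := two_le_tpn ne24 a23.symm a34 (by omega) hdeg4
      omega
  refine ⟨notbad3, ?_⟩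
  rintro ⟨b4, b5, b6⟩
  -- degrees of u4, u5; u6 is 6p
  have hd4 : degN G u4 = 5 := by
    rcases b4 with ⟨h, ht⟩ | ⟨h, ht⟩
    · exact h
    · exfalso
      have hd5' : 3 ≤ degN G u5 := by rcases b5 with ⟨h5, _⟩ | ⟨h5, _⟩ <;> omega
      have h2t := two_le_tpn ne35 a34.symm a45 hdeg3 hd5'
      omega
  have htpn4 : tpn G u4 = 2 := by
    rcases b4 with ⟨_, ht⟩ | ⟨h, _⟩
    · exact ht
    · exfalso; omega
  have hd5 : degN G u5 = 5 := by
    rcases b5 with ⟨h, _⟩ | ⟨h, ht⟩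
    · exact h
    · exfalso
      have h2t := two_le_tpn ne46 a45.symm a56 (by omega) hdeg6
      omega
  have htpn5 : tpn G u5 = 2 := by
    rcases b5 with ⟨_, ht⟩ | ⟨h, _⟩
    · exact ht
    · exfalso; omega
  have hnot5s6 : ¬ Is5s G u6 := by
    rintro ⟨hd6, _⟩
    have hN6Hcard : {x | (deleteVert G u1).Adj u6 x}.ncard = 4 := by
      rw [NH_eq ne16.symm,
        Set.ncard_diff_singleton_of_mem (show u1 ∈ {x | G.Adj u6 x} from a61)]
      have h5 : {x | G.Adj u6 x}.ncard = 5 := hd6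
      omega
    have hAll6 : ∀ x, (deleteVert G u1).Adj u6 x → c x = 4 := by
      have hsub : {w | (deleteVert G u1).Adj u6 w ∧ c w = c u6} ⊆
          {x | (deleteVert G u1).Adj u6 x} := fun w hw => hw.1
      have heq := Set.eq_of_subset_of_ncard_le hsub (by rw [hN6Hcard, d6]) (Set.toFinite _)
      intro x hx
      have hx' : x ∈ {w | (deleteVert G u1).Adj u6 w ∧ c w = c u6} := by
        rw [heq]; exact hx
      rw [← d2']; exact hx'.2
    refine hncol (L_UP6 G u1 u2 u6 c hc hN1 ne12.symm ne16.symm ne26 d2 ?_ ?_)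
    · have hemp : {x | (deleteVert G u1).Adj u6 x ∧ c x = 3} = ∅ := by
        rw [Set.eq_empty_iff_forall_notMem]
        rintro x ⟨hx, hx3⟩
        have := hAll6 x hx
        omega
      rw [hemp, Set.ncard_empty]; omega
    · intro x hx hx3
      exfalso
      have := hAll6 x hx
      omega
  have h6p : Is6p G u6 := by
    rcases b6 with h | h
    · exact absurd h hnot5s6
    · exact h
  obtain ⟨hd6, htpn6⟩ := h6p
  have h3plus6 : ∀ x, G.Adj u6 x → x ≠ u5 → degN G x ≤ 2 := by
    intro x hx hne
    by_contra hh
    push_neg at hh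
    exact hne (tpn_unique htpn6 a56.symm (by omega) hx hh)
  have hN6Hcard : {x | (deleteVert G u1).Adj u6 x}.ncard = 5 := by
    rw [NH_eq ne16.symm,
      Set.ncard_diff_singleton_of_mem (show u1 ∈ {x | G.Adj u6 x} from a61)]
    have h6 : {x | G.Adj u6 x}.ncard = 6 := hd6
    omega
  have hH65 : (deleteVert G u1).Adj u6 u5 := ⟨a56.symm, ne16.symm, ne15.symm⟩
  have hn36cnt : {x | (deleteVert G u1).Adj u6 x ∧ c x = 3}.ncard = 1 := by
    have hs : {x | (deleteVert G u1).Adj u6 x}.ncard =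
        {x | (deleteVert G u1).Adj u6 x ∧ c x = 3}.ncard +
        {x | (deleteVert G u1).Adj u6 x ∧ c x = 4}.ncard := split34' hvals _
    have h4eq : {x | (deleteVert G u1).Adj u6 x ∧ c x = 4} =
        {w | (deleteVert G u1).Adj u6 w ∧ c w = c u6} := by rw [d2']
    rw [hN6Hcard, h4eq, d6] at hs
    omega
  have hc5 : c u5 = 3 := by
    by_contra hh
    have h45 : c u5 = 4 := by rcases hvals u5 with h | h; exact absurd h hh; exact h
    refine hncol (L_UP6 G u1 u2 u6 c hc hN1 ne12.symm ne16.symm ne26 d2 (by omega) ?_)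
    intro x hx hx3
    left
    refine h3plus6 x hx.1 ?_
    rintro rfl
    omega
  have hB4 : ∀ x, (deleteVert G u1).Adj u6 x → x ≠ u5 → c x = 4 := by
    have hsub : {w | (deleteVert G u1).Adj u6 w ∧ c w = c u6} ⊆
        {x | (deleteVert G u1).Adj u6 x} \ {u5} := by
      rintro w ⟨hw, hcw⟩
      refine ⟨hw, ?_⟩
      simp only [Set.mem_singleton_iff]
      rintro rfl
      rw [d2'] at hcw
      omega
    have hcard : ({x | (deleteVert G u1).Adj u6 x} \ {u5}).ncard = 4 := by
      rw [Set.ncard_diff_singleton_of_mem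
        (show u5 ∈ {x | (deleteVert G u1).Adj u6 x} from hH65), hN6Hcard]
    have heq := Set.eq_of_subset_of_ncard_le hsub (by rw [hcard, d6]) (Set.toFinite _)
    intro x hx hne
    have hx' : x ∈ {w | (deleteVert G u1).Adj u6 w ∧ c w = c u6} := by
      rw [heq]
      exact ⟨hx, by simpa using hne⟩
    rw [← d2']; exact hx'.2
  have hQdeg : ∀ x, G.Adj u5 x → x ≠ u4 → x ≠ u6 → degN G x ≤ 2 :=
    tpn_two htpn5 ne46 a45.symm a56 (by omega) (by omega)
  have hcnt5 : {w | G.Adj u5 w ∧ w ≠ u6}.ncard ≤ 4 := by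
    have hEq : {w | G.Adj u5 w ∧ w ≠ u6} = {w | G.Adj u5 w} \ {u6} := by
      ext x
      simp only [Set.mem_setOf_eq, Set.mem_diff, Set.mem_singleton_iff]
    rw [hEq, Set.ncard_diff_singleton_of_mem (show u6 ∈ {w | G.Adj u5 w} from a56)]
    have h5 : {w | G.Adj u5 w}.ncard = 5 := hd5
    omega
  have hC2 : c u4 = 4 ∧ {w | (deleteVert G u1).Adj u4 w ∧ c w = c u4}.ncard = 4 := by
    by_contra hh
    have hu4' : c u4 = 3 ∨
        (c u4 = 4 ∧ {w | (deleteVert G u1).Adj u4 w ∧ c w = c u4}.ncard ≤ 3) := by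
      rcases hvals u4 with h | h
      · exact Or.inl h
      · right
        refine ⟨h, ?_⟩
        have hle := hc.2 u4
        have hne4 : ¬ ({w | (deleteVert G u1).Adj u4 w ∧ c w = c u4}.ncard = 4) :=
          fun hcc => hh ⟨h, hcc⟩
        omega
    exact hncol (L_C2 G u1 u2 u4 u5 u6 c hc hN1 ne12.symm ne16.symm ne26 ne25 ne14.symm
      ne45 ne46 ne15.symm ne56 hn41 hn51 hn46 d2 hc5 hB4 hu4' hQdeg hcnt5)
  have hR4 : ∀ x, G.Adj u4 x → x ≠ u5 → c x = 4 := by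
    have hsub : {w | (deleteVert G u1).Adj u4 w ∧ c w = c u4} ⊆
        {x | G.Adj u4 x} \ {u5} := by
      rintro w ⟨hw, hcw⟩
      refine ⟨hw.1, ?_⟩
      simp only [Set.mem_singleton_iff]
      rintro rfl
      rw [hC2.1] at hcw
      omega
    have hcard : ({x | G.Adj u4 x} \ {u5}).ncard = 4 := by
      rw [Set.ncard_diff_singleton_of_mem (show u5 ∈ {x | G.Adj u4 x} from a45)]
      have h5 : {x | G.Adj u4 x}.ncard = 5 := hd4
      omega
    have heq := Set.eq_of_subset_of_ncard_le hsub (by rw [hcard, hC2.2]) (Set.toFinite _)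
    intro x hx hne
    have hxu1 : x ≠ u1 := by rintro rfl; exact hn41 hx
    have hx' : x ∈ {w | (deleteVert G u1).Adj u4 w ∧ c w = c u4} := by
      rw [heq]
      exact ⟨hx, by simpa using hne⟩
    rw [← hC2.1]; exact hx'.2
  have hcnt5' : {w | G.Adj u5 w ∧ w ≠ u4 ∧ w ≠ u6}.ncard ≤ 4 := by
    refine le_trans (Set.ncard_le_ncard ?_ (Set.toFinite _)) hcnt5
    rintro w ⟨h1, h2, h3⟩
    exact ⟨h1, h3⟩
  exact hncol (L_C3 G u1 u2 u4 u5 u6 c hc hN1 ne12.symm ne16.symm ne26 ne25 ne24 ne14.symm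
    ne45 ne46 ne15.symm ne56 hn41 hn51 hn46 hTri45 hn24 d2 hR4 hB4 hQdeg hcnt5')

lemma core_bound (G : SimpleGraph V) (hG : MinNonColorable34 G) (hgirth : GirthAtLeast5 G)
    (u1 u2 u3 u4 u5 u6 : V)
    (ne12 : u1 ≠ u2) (ne13 : u1 ≠ u3) (ne14 : u1 ≠ u4) (ne15 : u1 ≠ u5) (ne16 : u1 ≠ u6)
    (ne23 : u2 ≠ u3) (ne24 : u2 ≠ u4) (ne25 : u2 ≠ u5) (ne26 : u2 ≠ u6)
    (ne34 : u3 ≠ u4) (ne35 : u3 ≠ u5) (ne36 : u3 ≠ u6)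
    (ne45 : u4 ≠ u5) (ne46 : u4 ≠ u6) (ne56 : u5 ≠ u6)
    (a12 : G.Adj u1 u2) (a23 : G.Adj u2 u3) (a34 : G.Adj u3 u4)
    (a45 : G.Adj u4 u5) (a56 : G.Adj u5 u6) (a61 : G.Adj u6 u1)
    (hdeg1 : degN G u1 = 2) (h5p2 : Is5p G u2)
    (hdeg3 : 3 ≤ degN G u3) (hdeg4 : 3 ≤ degN G u4)
    (hdeg5 : 3 ≤ degN G u5) (hdeg6 : 3 ≤ degN G u6) :
    {x ∈ ({u1, u2, u3, u4, u5, u6} : Set V) | Is5s G x ∨ Is6p G x}.ncard ≤ 2 := by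
  obtain ⟨nb3, nbt⟩ := core_cfg G hG hgirth u1 u2 u3 u4 u5 u6 ne12 ne13 ne14 ne15 ne16
    ne23 ne24 ne25 ne26 ne34 ne35 ne36 ne45 ne46 ne56 a12 a23 a34 a45 a56 a61
    hdeg1 h5p2 hdeg3 hdeg4 hdeg5 hdeg6
  by_contra hgt
  push_neg at hgt
  have hsub : {x ∈ ({u1, u2, u3, u4, u5, u6} : Set V) | Is5s G x ∨ Is6p G x} ⊆
      ({u4, u5, u6} : Set V) := by
    rintro x ⟨hxS, hbad⟩
    have hdx : degN G x = 5 ∨ degN G x = 6 := by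
      rcases hbad with ⟨h, _⟩ | ⟨h, _⟩
      · exact Or.inl h
      · exact Or.inr h
    simp only [Set.mem_insert_iff, Set.mem_singleton_iff] at hxS ⊢
    rcases hxS with rfl | rfl | rfl | rfl | rfl | rfl
    · exfalso; omega
    · exfalso
      obtain ⟨hp5d, hp5t⟩ := h5p2
      rcases hbad with ⟨hb1, hb2⟩ | ⟨hb1, hb2⟩ <;> omega
    · exact absurd hbad nb3
    · exact Or.inl rfl
    · exact Or.inr (Or.inl rfl)
    · exact Or.inr (Or.inr rfl)
  have hT3 : ({u4, u5, u6} : Set V).ncard ≤ 3 := by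
    refine le_trans (Set.ncard_insert_le _ _) ?_
    have h2 := Set.ncard_insert_le u5 ({u6} : Set V)
    have h1 : ({u6} : Set V).ncard = 1 := Set.ncard_singleton u6
    omega
  have heq := Set.eq_of_subset_of_ncard_le hsub (by omega) (Set.toFinite _)
  have hb4 : Is5s G u4 ∨ Is6p G u4 := by
    have hm : u4 ∈ {x ∈ ({u1, u2, u3, u4, u5, u6} : Set V) | Is5s G x ∨ Is6p G x} := by
      rw [heq]; simp
    exact hm.2
  have hb5 : Is5s G u5 ∨ Is6p G u5 := by
    have hm : u5 ∈ {x ∈ ({u1, u2, u3, u4, u5, u6} : Set V) | Is5s G x ∨ Is6p G x} := by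
      rw [heq]; simp
    exact hm.2
  have hb6 : Is5s G u6 ∨ Is6p G u6 := by
    have hm : u6 ∈ {x ∈ ({u1, u2, u3, u4, u5, u6} : Set V) | Is5s G x ∨ Is6p G x} := by
      rw [heq]; simp
    exact hm.2
  exact nbt ⟨hb4, hb5, hb6⟩

end Helpers


/-- In a minimally non-(3,4)-colorable graph of girth at least 5, if
exactly one vertex of a 6-cycle has degree 2 and exactly one is a 5p-vertex, then
at most two of its vertices are 5s-vertices or 6p-vertices. -/
theorem stmt_14 {V : Type*} [Fintype V] (G : SimpleGraph V)
    (hG : MinNonColorable34 G) (hgirth : GirthAtLeast5 G)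
    (u1 u2 u3 u4 u5 u6 : V)
    (hnd : ([u1, u2, u3, u4, u5, u6] : List V).Nodup)
    (a12 : G.Adj u1 u2) (a23 : G.Adj u2 u3) (a34 : G.Adj u3 u4)
    (a45 : G.Adj u4 u5) (a56 : G.Adj u5 u6) (a61 : G.Adj u6 u1)
    (h2 : {x ∈ ({u1, u2, u3, u4, u5, u6} : Set V) | degN G x = 2}.ncard = 1)
    (h5p : {x ∈ ({u1, u2, u3, u4, u5, u6} : Set V) | Is5p G x}.ncard = 1) :
    {x ∈ ({u1, u2, u3, u4, u5, u6} : Set V) | Is5s G x ∨ Is6p G x}.ncard ≤ 2 := by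
  classical
  simp only [List.nodup_cons, List.mem_cons, List.not_mem_nil, or_false, not_or,
    List.mem_singleton, List.nodup_nil, and_true, not_false_eq_true] at hnd
  obtain ⟨⟨en12, en13, en14, en15, en16⟩, ⟨en23, en24, en25, en26⟩, ⟨en34, en35, en36⟩,
    ⟨en45, en46⟩, en56⟩ := hnd
  have ne12 : u1 ≠ u2 := en12
  have ne13 : u1 ≠ u3 := en13
  have ne14 : u1 ≠ u4 := en14
  have ne15 : u1 ≠ u5 := en15
  have ne16 : u1 ≠ u6 := en16
  have ne23 : u2 ≠ u3 := en23
  have ne24 : u2 ≠ u4 := en24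
  have ne25 : u2 ≠ u5 := en25
  have ne26 : u2 ≠ u6 := en26
  have ne34 : u3 ≠ u4 := en34
  have ne35 : u3 ≠ u5 := en35
  have ne36 : u3 ≠ u6 := en36
  have ne45 : u4 ≠ u5 := en45
  have ne46 : u4 ≠ u6 := en46
  have ne56 : u5 ≠ u6 := en56
  obtain ⟨a, ha⟩ := Set.ncard_eq_one.mp h2
  obtain ⟨p, hp⟩ := Set.ncard_eq_one.mp h5p
  have haMem : a ∈ {x ∈ ({u1, u2, u3, u4, u5, u6} : Set V) | degN G x = 2} := by
    rw [ha]; exact Set.mem_singleton _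
  obtain ⟨haS, haP2⟩ := haMem
  have hpMem : p ∈ {x ∈ ({u1, u2, u3, u4, u5, u6} : Set V) | Is5p G x} := by
    rw [hp]; exact Set.mem_singleton _
  obtain ⟨hpS, hpP2⟩ := hpMem
  have h2unique : ∀ x, x ∈ ({u1, u2, u3, u4, u5, u6} : Set V) → degN G x = 2 → x = a := by
    intro x hx hdx
    have hm : x ∈ ({a} : Set V) := by rw [← ha]; exact ⟨hx, hdx⟩
    simpa using hm
  have mem1 : u1 ∈ ({u1, u2, u3, u4, u5, u6} : Set V) := by simp
  have mem2 : u2 ∈ ({u1, u2, u3, u4, u5, u6} : Set V) := by simp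
  have mem3 : u3 ∈ ({u1, u2, u3, u4, u5, u6} : Set V) := by simp
  have mem4 : u4 ∈ ({u1, u2, u3, u4, u5, u6} : Set V) := by simp
  have mem5 : u5 ∈ ({u1, u2, u3, u4, u5, u6} : Set V) := by simp
  have mem6 : u6 ∈ ({u1, u2, u3, u4, u5, u6} : Set V) := by simp
  have m1 : 2 ≤ degN G u1 := two_le_degN ne26 a12 a61.symm
  have m2 : 2 ≤ degN G u2 := two_le_degN ne13 a12.symm a23
  have m3 : 2 ≤ degN G u3 := two_le_degN ne24 a23.symm a34
  have m4 : 2 ≤ degN G u4 := two_le_degN ne35 a34.symm a45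
  have m5 : 2 ≤ degN G u5 := two_le_degN ne46 a45.symm a56
  have m6 : 2 ≤ degN G u6 := two_le_degN ne15.symm a56.symm a61
  have g : ∀ x, x ∈ ({u1, u2, u3, u4, u5, u6} : Set V) → 2 ≤ degN G x → x ≠ a →
      3 ≤ degN G x := by
    intro x hx hm hne
    by_contra hlt
    push_neg at hlt
    exact hne (h2unique x hx (by omega))
  have hpS' : p = u1 ∨ p = u2 ∨ p = u3 ∨ p = u4 ∨ p = u5 ∨ p = u6 := by simpa using hpS
  rcases hpS' with hpk | hpk | hpk | hpk | hpk | hpk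
  · have hp5 : Is5p G u1 := hpk ▸ hpP2
    have hchoice : a = u6 ∨ a = u2 := by
      by_contra hcon
      push_neg at hcon
      have dprev : 3 ≤ degN G u6 := g u6 mem6 m6 hcon.1.symm
      have dnxt : 3 ≤ degN G u2 := g u2 mem2 m2 hcon.2.symm
      have h2t := two_le_tpn ne26.symm a61.symm a12 dprev dnxt
      have h1t := hp5.2
      omega
    rcases hchoice with hak | hak
    · have hdeg1' : degN G u6 = 2 := hak ▸ haP2
      have hset : ({u1, u2, u3, u4, u5, u6} : Set V) = ({u6, u1, u2, u3, u4, u5} : Set V) := by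
        ext x
        simp only [Set.mem_insert_iff, Set.mem_singleton_iff]
        constructor <;> rintro (rfl | rfl | rfl | rfl | rfl | rfl) <;> simp
      rw [hset]
      exact core_bound G hG hgirth u6 u1 u2 u3 u4 u5 ne16.symm ne26.symm ne36.symm ne46.symm ne56.symm ne12 ne13 ne14 ne15 ne23 ne24 ne25 ne34 ne35 ne45 a61 a12 a23 a34 a45 a56 hdeg1' hp5 (g u2 mem2 m2 (fun h => ne26 (h.trans hak))) (g u3 mem3 m3 (fun h => ne36 (h.trans hak))) (g u4 mem4 m4 (fun h => ne46 (h.trans hak))) (g u5 mem5 m5 (fun h => ne56 (h.trans hak)))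
    · have hdeg1' : degN G u2 = 2 := hak ▸ haP2
      have hset : ({u1, u2, u3, u4, u5, u6} : Set V) = ({u2, u1, u6, u5, u4, u3} : Set V) := by
        ext x
        simp only [Set.mem_insert_iff, Set.mem_singleton_iff]
        constructor <;> rintro (rfl | rfl | rfl | rfl | rfl | rfl) <;> simp
      rw [hset]
      exact core_bound G hG hgirth u2 u1 u6 u5 u4 u3 ne12.symm ne26 ne25 ne24 ne23 ne16 ne15 ne14 ne13 ne56.symm ne46.symm ne36.symm ne45.symm ne35.symm ne34.symm a12.symm a61.symm a56.symm a45.symm a34.symm a23.symm hdeg1' hp5 (g u6 mem6 m6 (fun h => ne26 (h.trans hak).symm)) (g u5 mem5 m5 (fun h => ne25 (h.trans hak).symm)) (g u4 mem4 m4 (fun h => ne24 (h.trans hak).symm)) (g u3 mem3 m3 (fun h => ne23 (h.trans hak).symm))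
  · have hp5 : Is5p G u2 := hpk ▸ hpP2
    have hchoice : a = u1 ∨ a = u3 := by
      by_contra hcon
      push_neg at hcon
      have dprev : 3 ≤ degN G u1 := g u1 mem1 m1 hcon.1.symm
      have dnxt : 3 ≤ degN G u3 := g u3 mem3 m3 hcon.2.symm
      have h2t := two_le_tpn ne13 a12.symm a23 dprev dnxt
      have h1t := hp5.2
      omega
    rcases hchoice with hak | hak
    · have hdeg1' : degN G u1 = 2 := hak ▸ haP2
      exact core_bound G hG hgirth u1 u2 u3 u4 u5 u6 ne12 ne13 ne14 ne15 ne16 ne23 ne24 ne25 ne26 ne34 ne35 ne36 ne45 ne46 ne56 a12 a23 a34 a45 a56 a61 hdeg1' hp5 (g u3 mem3 m3 (fun h => ne13 (h.trans hak).symm)) (g u4 mem4 m4 (fun h => ne14 (h.trans hak).symm)) (g u5 mem5 m5 (fun h => ne15 (h.trans hak).symm)) (g u6 mem6 m6 (fun h => ne16 (h.trans hak).symm))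
    · have hdeg1' : degN G u3 = 2 := hak ▸ haP2
      have hset : ({u1, u2, u3, u4, u5, u6} : Set V) = ({u3, u2, u1, u6, u5, u4} : Set V) := by
        ext x
        simp only [Set.mem_insert_iff, Set.mem_singleton_iff]
        constructor <;> rintro (rfl | rfl | rfl | rfl | rfl | rfl) <;> simp
      rw [hset]
      exact core_bound G hG hgirth u3 u2 u1 u6 u5 u4 ne23.symm ne13.symm ne36 ne35 ne34 ne12.symm ne26 ne25 ne24 ne16 ne15 ne14 ne56.symm ne46.symm ne45.symm a23.symm a12.symm a61.symm a56.symm a45.symm a34.symm hdeg1' hp5 (g u1 mem1 m1 (fun h => ne13 (h.trans hak))) (g u6 mem6 m6 (fun h => ne36 (h.trans hak).symm)) (g u5 mem5 m5 (fun h => ne35 (h.trans hak).symm)) (g u4 mem4 m4 (fun h => ne34 (h.trans hak).symm))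
  · have hp5 : Is5p G u3 := hpk ▸ hpP2
    have hchoice : a = u2 ∨ a = u4 := by
      by_contra hcon
      push_neg at hcon
      have dprev : 3 ≤ degN G u2 := g u2 mem2 m2 hcon.1.symm
      have dnxt : 3 ≤ degN G u4 := g u4 mem4 m4 hcon.2.symm
      have h2t := two_le_tpn ne24 a23.symm a34 dprev dnxt
      have h1t := hp5.2
      omega
    rcases hchoice with hak | hak
    · have hdeg1' : degN G u2 = 2 := hak ▸ haP2
      have hset : ({u1, u2, u3, u4, u5, u6} : Set V) = ({u2, u3, u4, u5, u6, u1} : Set V) := by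
        ext x
        simp only [Set.mem_insert_iff, Set.mem_singleton_iff]
        constructor <;> rintro (rfl | rfl | rfl | rfl | rfl | rfl) <;> simp
      rw [hset]
      exact core_bound G hG hgirth u2 u3 u4 u5 u6 u1 ne23 ne24 ne25 ne26 ne12.symm ne34 ne35 ne36 ne13.symm ne45 ne46 ne14.symm ne56 ne15.symm ne16.symm a23 a34 a45 a56 a61 a12 hdeg1' hp5 (g u4 mem4 m4 (fun h => ne24 (h.trans hak).symm)) (g u5 mem5 m5 (fun h => ne25 (h.trans hak).symm)) (g u6 mem6 m6 (fun h => ne26 (h.trans hak).symm)) (g u1 mem1 m1 (fun h => ne12 (h.trans hak)))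
    · have hdeg1' : degN G u4 = 2 := hak ▸ haP2
      have hset : ({u1, u2, u3, u4, u5, u6} : Set V) = ({u4, u3, u2, u1, u6, u5} : Set V) := by
        ext x
        simp only [Set.mem_insert_iff, Set.mem_singleton_iff]
        constructor <;> rintro (rfl | rfl | rfl | rfl | rfl | rfl) <;> simp
      rw [hset]
      exact core_bound G hG hgirth u4 u3 u2 u1 u6 u5 ne34.symm ne24.symm ne14.symm ne46 ne45 ne23.symm ne13.symm ne36 ne35 ne12.symm ne26 ne25 ne16 ne15 ne56.symm a34.symm a23.symm a12.symm a61.symm a56.symm a45.symm hdeg1' hp5 (g u2 mem2 m2 (fun h => ne24 (h.trans hak))) (g u1 mem1 m1 (fun h => ne14 (h.trans hak))) (g u6 mem6 m6 (fun h => ne46 (h.trans hak).symm)) (g u5 mem5 m5 (fun h => ne45 (h.trans hak).symm))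
  · have hp5 : Is5p G u4 := hpk ▸ hpP2
    have hchoice : a = u3 ∨ a = u5 := by
      by_contra hcon
      push_neg at hcon
      have dprev : 3 ≤ degN G u3 := g u3 mem3 m3 hcon.1.symm
      have dnxt : 3 ≤ degN G u5 := g u5 mem5 m5 hcon.2.symm
      have h2t := two_le_tpn ne35 a34.symm a45 dprev dnxt
      have h1t := hp5.2
      omega
    rcases hchoice with hak | hak
    · have hdeg1' : degN G u3 = 2 := hak ▸ haP2
      have hset : ({u1, u2, u3, u4, u5, u6} : Set V) = ({u3, u4, u5, u6, u1, u2} : Set V) := by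
        ext x
        simp only [Set.mem_insert_iff, Set.mem_singleton_iff]
        constructor <;> rintro (rfl | rfl | rfl | rfl | rfl | rfl) <;> simp
      rw [hset]
      exact core_bound G hG hgirth u3 u4 u5 u6 u1 u2 ne34 ne35 ne36 ne13.symm ne23.symm ne45 ne46 ne14.symm ne24.symm ne56 ne15.symm ne25.symm ne16.symm ne26.symm ne12 a34 a45 a56 a61 a12 a23 hdeg1' hp5 (g u5 mem5 m5 (fun h => ne35 (h.trans hak).symm)) (g u6 mem6 m6 (fun h => ne36 (h.trans hak).symm)) (g u1 mem1 m1 (fun h => ne13 (h.trans hak))) (g u2 mem2 m2 (fun h => ne23 (h.trans hak)))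
    · have hdeg1' : degN G u5 = 2 := hak ▸ haP2
      have hset : ({u1, u2, u3, u4, u5, u6} : Set V) = ({u5, u4, u3, u2, u1, u6} : Set V) := by
        ext x
        simp only [Set.mem_insert_iff, Set.mem_singleton_iff]
        constructor <;> rintro (rfl | rfl | rfl | rfl | rfl | rfl) <;> simp
      rw [hset]
      exact core_bound G hG hgirth u5 u4 u3 u2 u1 u6 ne45.symm ne35.symm ne25.symm ne15.symm ne56 ne34.symm ne24.symm ne14.symm ne46 ne23.symm ne13.symm ne36 ne12.symm ne26 ne16 a45.symm a34.symm a23.symm a12.symm a61.symm a56.symm hdeg1' hp5 (g u3 mem3 m3 (fun h => ne35 (h.trans hak))) (g u2 mem2 m2 (fun h => ne25 (h.trans hak))) (g u1 mem1 m1 (fun h => ne15 (h.trans hak))) (g u6 mem6 m6 (fun h => ne56 (h.trans hak).symm))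
  · have hp5 : Is5p G u5 := hpk ▸ hpP2
    have hchoice : a = u4 ∨ a = u6 := by
      by_contra hcon
      push_neg at hcon
      have dprev : 3 ≤ degN G u4 := g u4 mem4 m4 hcon.1.symm
      have dnxt : 3 ≤ degN G u6 := g u6 mem6 m6 hcon.2.symm
      have h2t := two_le_tpn ne46 a45.symm a56 dprev dnxt
      have h1t := hp5.2
      omega
    rcases hchoice with hak | hak
    · have hdeg1' : degN G u4 = 2 := hak ▸ haP2
      have hset : ({u1, u2, u3, u4, u5, u6} : Set V) = ({u4, u5, u6, u1, u2, u3} : Set V) := by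
        ext x
        simp only [Set.mem_insert_iff, Set.mem_singleton_iff]
        constructor <;> rintro (rfl | rfl | rfl | rfl | rfl | rfl) <;> simp
      rw [hset]
      exact core_bound G hG hgirth u4 u5 u6 u1 u2 u3 ne45 ne46 ne14.symm ne24.symm ne34.symm ne56 ne15.symm ne25.symm ne35.symm ne16.symm ne26.symm ne36.symm ne12 ne13 ne23 a45 a56 a61 a12 a23 a34 hdeg1' hp5 (g u6 mem6 m6 (fun h => ne46 (h.trans hak).symm)) (g u1 mem1 m1 (fun h => ne14 (h.trans hak))) (g u2 mem2 m2 (fun h => ne24 (h.trans hak))) (g u3 mem3 m3 (fun h => ne34 (h.trans hak)))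
    · have hdeg1' : degN G u6 = 2 := hak ▸ haP2
      have hset : ({u1, u2, u3, u4, u5, u6} : Set V) = ({u6, u5, u4, u3, u2, u1} : Set V) := by
        ext x
        simp only [Set.mem_insert_iff, Set.mem_singleton_iff]
        constructor <;> rintro (rfl | rfl | rfl | rfl | rfl | rfl) <;> simp
      rw [hset]
      exact core_bound G hG hgirth u6 u5 u4 u3 u2 u1 ne56.symm ne46.symm ne36.symm ne26.symm ne16.symm ne45.symm ne35.symm ne25.symm ne15.symm ne34.symm ne24.symm ne14.symm ne23.symm ne13.symm ne12.symm a56.symm a45.symm a34.symm a23.symm a12.symm a61.symm hdeg1' hp5 (g u4 mem4 m4 (fun h => ne46 (h.trans hak))) (g u3 mem3 m3 (fun h => ne36 (h.trans hak))) (g u2 mem2 m2 (fun h => ne26 (h.trans hak))) (g u1 mem1 m1 (fun h => ne16 (h.trans hak)))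
  · have hp5 : Is5p G u6 := hpk ▸ hpP2
    have hchoice : a = u5 ∨ a = u1 := by
      by_contra hcon
      push_neg at hcon
      have dprev : 3 ≤ degN G u5 := g u5 mem5 m5 hcon.1.symm
      have dnxt : 3 ≤ degN G u1 := g u1 mem1 m1 hcon.2.symm
      have h2t := two_le_tpn ne15.symm a56.symm a61 dprev dnxt
      have h1t := hp5.2
      omega
    rcases hchoice with hak | hak
    · have hdeg1' : degN G u5 = 2 := hak ▸ haP2
      have hset : ({u1, u2, u3, u4, u5, u6} : Set V) = ({u5, u6, u1, u2, u3, u4} : Set V) := by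
        ext x
        simp only [Set.mem_insert_iff, Set.mem_singleton_iff]
        constructor <;> rintro (rfl | rfl | rfl | rfl | rfl | rfl) <;> simp
      rw [hset]
      exact core_bound G hG hgirth u5 u6 u1 u2 u3 u4 ne56 ne15.symm ne25.symm ne35.symm ne45.symm ne16.symm ne26.symm ne36.symm ne46.symm ne12 ne13 ne14 ne23 ne24 ne34 a56 a61 a12 a23 a34 a45 hdeg1' hp5 (g u1 mem1 m1 (fun h => ne15 (h.trans hak))) (g u2 mem2 m2 (fun h => ne25 (h.trans hak))) (g u3 mem3 m3 (fun h => ne35 (h.trans hak))) (g u4 mem4 m4 (fun h => ne45 (h.trans hak)))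
    · have hdeg1' : degN G u1 = 2 := hak ▸ haP2
      have hset : ({u1, u2, u3, u4, u5, u6} : Set V) = ({u1, u6, u5, u4, u3, u2} : Set V) := by
        ext x
        simp only [Set.mem_insert_iff, Set.mem_singleton_iff]
        constructor <;> rintro (rfl | rfl | rfl | rfl | rfl | rfl) <;> simp
      rw [hset]
      exact core_bound G hG hgirth u1 u6 u5 u4 u3 u2 ne16 ne15 ne14 ne13 ne12 ne56.symm ne46.symm ne36.symm ne26.symm ne45.symm ne35.symm ne25.symm ne34.symm ne24.symm ne23.symm a61.symm a56.symm a45.symm a34.symm a23.symm a12.symm hdeg1' hp5 (g u5 mem5 m5 (fun h => ne15 (h.trans hak).symm)) (g u4 mem4 m4 (fun h => ne14 (h.trans hak).symm)) (g u3 mem3 m3 (fun h => ne13 (h.trans hak).symm)) (g u2 mem2 m2 (fun h => ne12 (h.trans hak).symm))
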